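/- Let n ≥ 3 be odd and let a, b ∈ ℂ with a² ≠ b². Consider the symmetric bicritical map f(z) = −(a z^n + b)/(b z^n + a), which commutes with the involution ι(z) = 1/z. Then f(1) = −1 and f(−1) = 1, so {1, −1} is a period-two orbit of f, and the multiplier of this orbit is f′(1) · f′(−1) = n². (Remark 1.5, component Σ₋ of the symmetry locus: the two fixed points of ι form a period-two orbit of f with multiplier n², so Σ₋ is contained in the curve Per₂(n²).) -/

import Mathlib

/-- Remark 1.5, component `Σ₋` of the symmetry locus: for odd `n ≥ 3` the
symmetric bicritical map `f(z) = -(a z^n + b)/(b z^n + a)` interchanges the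
two fixed points `±1` of the involution `ι(z) = 1/z`, so `{1, -1}` is a
period-two orbit of `f`, and its multiplier is `f'(1) · f'(-1) = n²`. -/
theorem stmt6 (n : ℕ) (hn : 3 ≤ n) (hodd : Odd n) (a b : ℂ)
    (hab : a ^ 2 ≠ b ^ 2) :
    let f : ℂ → ℂ := fun z => -((a * z ^ n + b) / (b * z ^ n + a))
    f 1 = -1 ∧ f (-1) = 1 ∧ deriv f 1 * deriv f (-1) = (n : ℂ) ^ 2 := by
  intro f
  have hsum : a + b ≠ 0 := by
    intro h
    apply hab
    have : a = -b := by linear_combination h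
    rw [this]; ring
  have hdiff : a - b ≠ 0 := by
    intro h
    apply hab
    have : a = b := by linear_combination h
    rw [this]
  have hneg : ((-1 : ℂ)) ^ n = -1 := hodd.neg_one_pow
  have hneg' : ((-1 : ℂ)) ^ (n - 1) = 1 := by
    have : Even (n - 1) := Nat.Odd.sub_odd hodd odd_one
    exact this.neg_one_pow
  have key : ∀ z : ℂ, b * z ^ n + a ≠ 0 →
      HasDerivAt f (-((a * (n * z ^ (n-1)) * (b * z ^ n + a)
        - (a * z ^ n + b) * (b * (n * z ^ (n-1)))) / (b * z ^ n + a) ^ 2)) z := by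
    intro z hz
    have h1 : HasDerivAt (fun x : ℂ => a * x ^ n + b) (a * (n * z ^ (n-1))) z :=
      ((hasDerivAt_pow n z).const_mul a).add_const b
    have h2 : HasDerivAt (fun x : ℂ => b * x ^ n + a) (b * (n * z ^ (n-1))) z :=
      ((hasDerivAt_pow n z).const_mul b).add_const a
    exact (h1.div h2 hz).neg
  have hz1 : b * (1:ℂ) ^ n + a ≠ 0 := by
    simpa [add_comm] using hsum
  have hz2 : b * (-1:ℂ) ^ n + a ≠ 0 := by
    rw [hneg]
    intro h; exact hdiff (by linear_combination h)
  have d1 := (key 1 hz1).deriv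
  have d2 := (key (-1) hz2).deriv
  have h1 : b + a ≠ 0 := fun h => hsum (by linear_combination h)
  have h2 : -b + a ≠ 0 := fun h => hdiff (by linear_combination h)
  refine ⟨?_, ?_, ?_⟩
  · show -((a * 1 ^ n + b) / (b * 1 ^ n + a)) = -1
    rw [one_pow, mul_one, mul_one, add_comm b a, div_self hsum]
  · show -((a * (-1) ^ n + b) / (b * (-1) ^ n + a)) = 1
    rw [hneg]
    rw [mul_neg_one, mul_neg_one]
    field_simp [h2]
    ring
  · rw [d1, d2, hneg, hneg']
    simp only [one_pow, mul_one, mul_neg_one]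
    field_simp [h1, h2]
    ring
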